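/- Let K = ℚ_p and let m ≥ 1 be an integer. Let c ∈ K, and let ξ_m : (ℤ_p/p^m ℤ_p)^× → ℤ_p^× be any function choosing a representative of each unit class modulo p^m. Fix a unit u ∈ ℤ_p^×. Define φ : K → K by φ(x) = (x - c)·ξ_m(ac_m(x - c))^{-1}·u + c for x ≠ c, and φ(c) = c, where ac_m(z) denotes the class of z·p^{-ord(z)} modulo p^m. Then φ is 1-Lipschitz. -/

import Mathlib

/-- The angular component modulo `p^m` of a nonzero `p`-adic number `z`:
the residue of `z * p^(-ord z)` in `ℤ_p / p^m`. -/
noncomputable def acm (p : ℕ) [Fact p.Prime] (m : ℕ) (z : ℚ_[p]) : ZMod (p ^ m) :=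
  if h : ‖z * (p : ℚ_[p]) ^ (-z.valuation)‖ ≤ 1 then
    PadicInt.toZModPow m (⟨z * (p : ℚ_[p]) ^ (-z.valuation), h⟩ : ℤ_[p])
  else 0

section aux

variable (p : ℕ) [Fact p.Prime] (m : ℕ)

lemma hp_pos : (0:ℝ) < p := by exact_mod_cast (Fact.out : p.Prime).pos

lemma hp_ne_one : (p:ℝ) ≠ 1 := by
  exact_mod_cast (Fact.out : p.Prime).ne_one

lemma hpQ_ne : (p : ℚ_[p]) ≠ 0 := by
  exact_mod_cast (Nat.cast_ne_zero (R := ℚ_[p])).mpr (Fact.out : p.Prime).ne_zero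

lemma norm_unit_part {z : ℚ_[p]} (hz : z ≠ 0) :
    ‖z * (p : ℚ_[p]) ^ (-z.valuation)‖ = 1 := by
  rw [norm_mul, norm_zpow, Padic.norm_p, Padic.norm_eq_zpow_neg_valuation hz,
    inv_zpow, ← zpow_neg, neg_neg, ← zpow_add₀ (ne_of_gt (hp_pos p))]
  simp

lemma acm_def {z : ℚ_[p]} (hz : z ≠ 0) :
    acm p m z = PadicInt.toZModPow m
      (⟨z * (p : ℚ_[p]) ^ (-z.valuation), le_of_eq (norm_unit_part p hz)⟩ : ℤ_[p]) := by
  rw [acm, dif_pos]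

lemma acm_isUnit {z : ℚ_[p]} (hz : z ≠ 0) : IsUnit (acm p m z) := by
  rw [acm_def p m hz]
  exact IsUnit.map _ (PadicInt.isUnit_iff.mpr (by
    simpa using norm_unit_part p hz))

lemma acm_one : acm p m 1 = 1 := by
  have h1 : (1:ℚ_[p]) ≠ 0 := one_ne_zero
  rw [acm_def p m h1]
  have : (⟨1 * (p : ℚ_[p]) ^ (-(1:ℚ_[p]).valuation),
      le_of_eq (norm_unit_part p h1)⟩ : ℤ_[p]) = (1 : ℤ_[p]) := by
    apply PadicInt.ext
    rw [PadicInt.coe_one]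
    show (1:ℚ_[p]) * (p : ℚ_[p]) ^ (-(1:ℚ_[p]).valuation) = 1
    simp [Padic.valuation_one]
  rw [this, map_one]

lemma acm_mul {z w : ℚ_[p]} (hz : z ≠ 0) (hw : w ≠ 0) :
    acm p m (z * w) = acm p m z * acm p m w := by
  rw [acm_def p m (mul_ne_zero hz hw), acm_def p m hz, acm_def p m hw]
  refine Eq.trans ?_ (map_mul (PadicInt.toZModPow m) _ _)
  congr 1
  apply PadicInt.ext
  refine Eq.trans ?_ (PadicInt.coe_mul _ _).symm
  show z * w * (p : ℚ_[p]) ^ (-(z*w).valuation) =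
    (z * (p : ℚ_[p]) ^ (-z.valuation)) * (w * (p : ℚ_[p]) ^ (-w.valuation))
  rw [Padic.valuation_mul hz hw, neg_add, zpow_add₀ (hpQ_ne p)]
  ring

lemma acm_eq_iff {z w : ℚ_[p]} (hz : z ≠ 0) (hw : w ≠ 0) (hnorm : ‖z‖ = ‖w‖) :
    acm p m z = acm p m w ↔ ‖z - w‖ ≤ ‖z‖ * (p:ℝ) ^ (-(m:ℤ)) := by
  have hval : z.valuation = w.valuation := by
    have := hnorm
    rw [Padic.norm_eq_zpow_neg_valuation hz, Padic.norm_eq_zpow_neg_valuation hw,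
      zpow_right_inj₀ (hp_pos p) (hp_ne_one p), neg_inj] at this
    exact this
  set l := z.valuation with hl
  set a : ℤ_[p] := ⟨z * (p : ℚ_[p]) ^ (-l), le_of_eq (norm_unit_part p hz)⟩ with ha
  set b : ℤ_[p] := ⟨w * (p : ℚ_[p]) ^ (-w.valuation), le_of_eq (norm_unit_part p hw)⟩ with hb
  have h1 : acm p m z = acm p m w ↔ PadicInt.toZModPow m (a - b) = 0 := by
    rw [acm_def p m hz, acm_def p m hw, map_sub, sub_eq_zero]
  have h2 : PadicInt.toZModPow m (a - b) = 0 ↔ ‖a - b‖ ≤ (p:ℝ) ^ (-(m:ℤ)) := by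
    rw [PadicInt.norm_le_pow_iff_mem_span_pow, ← PadicInt.ker_toZModPow, RingHom.mem_ker]
  have h3 : ‖a - b‖ = ‖z - w‖ * (p:ℝ) ^ l := by
    have : ((a - b : ℤ_[p]) : ℚ_[p]) = (z - w) * (p : ℚ_[p]) ^ (-l) := by
      rw [PadicInt.coe_sub]
      show z * (p : ℚ_[p]) ^ (-l) - w * (p : ℚ_[p]) ^ (-w.valuation) = _
      rw [← hval]
      ring
    have hcoe : ‖a - b‖ = ‖((a - b : ℤ_[p]) : ℚ_[p])‖ := rfl
    rw [hcoe, this, norm_mul, norm_zpow, Padic.norm_p,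
      inv_zpow, ← zpow_neg, neg_neg]
  rw [h1, h2, h3, Padic.norm_eq_zpow_neg_valuation hz, ← hl]
  rw [← zpow_add₀ (ne_of_gt (hp_pos p))]
  constructor
  · intro h
    calc ‖z - w‖ = ‖z - w‖ * (p:ℝ) ^ l * (p:ℝ) ^ (-l) := by
          rw [mul_assoc, ← zpow_add₀ (ne_of_gt (hp_pos p))]; simp
      _ ≤ (p:ℝ) ^ (-(m:ℤ)) * (p:ℝ) ^ (-l) := by
          apply mul_le_mul_of_nonneg_right h (zpow_nonneg (le_of_lt (hp_pos p)) _)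
      _ = (p:ℝ) ^ (-l + -(m:ℤ)) := by
          rw [← zpow_add₀ (ne_of_gt (hp_pos p))]; ring_nf
  · intro h
    calc ‖z - w‖ * (p:ℝ) ^ l ≤ (p:ℝ) ^ (-l + -(m:ℤ)) * (p:ℝ) ^ l := by
          apply mul_le_mul_of_nonneg_right h (zpow_nonneg (le_of_lt (hp_pos p)) _)
      _ = (p:ℝ) ^ (-(m:ℤ)) := by rw [← zpow_add₀ (ne_of_gt (hp_pos p))]; ring_nf

end aux

/-- Rescaling the angular component by a unit is a `1`-Lipschitz map: if
`ξ` chooses a norm-one representative of each unit class mod `p^m`, `u` is a unit,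
and `φ x = (x - c) * (ξ (acm p m (x - c)))⁻¹ * u + c` for `x ≠ c`, `φ c = c`,
then `φ` is `1`-Lipschitz. -/
theorem stmt9 (p : ℕ) [Fact p.Prime] (m : ℕ) (hm : 1 ≤ m)
    (c u : ℚ_[p]) (hu : ‖u‖ = 1)
    (ξ : ZMod (p ^ m) → ℚ_[p])
    (hξnorm : ∀ a : ZMod (p ^ m), IsUnit a → ‖ξ a‖ = 1)
    (hξrep : ∀ a : ZMod (p ^ m), IsUnit a → acm p m (ξ a) = a)
    (φ : ℚ_[p] → ℚ_[p]) (hφc : φ c = c)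
    (hφ : ∀ x : ℚ_[p], x ≠ c →
      φ x = (x - c) * (ξ (acm p m (x - c)))⁻¹ * u + c) :
    ∀ x y : ℚ_[p], ‖φ x - φ y‖ ≤ ‖x - y‖ := by
  have hu0 : u ≠ 0 := by intro h; rw [h, norm_zero] at hu; norm_num at hu
  -- basic facts for x ≠ c
  have hstep : ∀ x : ℚ_[p], x ≠ c →
      φ x - c = (x - c) * (ξ (acm p m (x - c)))⁻¹ * u ∧ ‖φ x - c‖ = ‖x - c‖ ∧
        acm p m (φ x - c) = acm p m u := by
    intro x hx
    have hxc : x - c ≠ 0 := sub_ne_zero.mpr hx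
    have hua : IsUnit (acm p m (x - c)) := acm_isUnit p m hxc
    have hξn : ‖ξ (acm p m (x - c))‖ = 1 := hξnorm _ hua
    have hξ0 : ξ (acm p m (x - c)) ≠ 0 := by
      intro h; rw [h, norm_zero] at hξn; norm_num at hξn
    have heq : φ x - c = (x - c) * (ξ (acm p m (x - c)))⁻¹ * u := by
      rw [hφ x hx]; ring
    have hnorm : ‖φ x - c‖ = ‖x - c‖ := by
      rw [heq, norm_mul, norm_mul, norm_inv, hξn, hu]; simp
    refine ⟨heq, hnorm, ?_⟩
    have hinv0 : (ξ (acm p m (x - c)))⁻¹ ≠ 0 := inv_ne_zero hξ0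
    have hmul : acm p m (ξ (acm p m (x - c))) * acm p m ((ξ (acm p m (x - c)))⁻¹) = 1 := by
      rw [← acm_mul p m hξ0 hinv0, mul_inv_cancel₀ hξ0, acm_one]
    rw [hξrep _ hua] at hmul
    rw [heq, acm_mul p m (mul_ne_zero hxc hinv0) hu0, acm_mul p m hxc hinv0]
    calc acm p m (x - c) * acm p m ((ξ (acm p m (x - c)))⁻¹) * acm p m u
        = 1 * acm p m u := by rw [hmul]
      _ = acm p m u := one_mul _
  intro x y
  by_cases hxy : x = y
  · simp [hxy]
  by_cases hx : x = c
  · by_cases hy : y = c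
    · rw [hx, hy]; simp
    · rw [hx, hφc, norm_sub_rev, norm_sub_rev c y]
      exact le_of_eq (hstep y hy).2.1
  by_cases hy : y = c
  · rw [hy, hφc]
    exact le_of_eq (hstep x hx).2.1
  -- main case
  obtain ⟨heqx, hnx, hacx⟩ := hstep x hx
  obtain ⟨heqy, hny, hacy⟩ := hstep y hy
  have hxc : x - c ≠ 0 := sub_ne_zero.mpr hx
  have hyc : y - c ≠ 0 := sub_ne_zero.mpr hy
  by_cases hn : ‖x - c‖ = ‖y - c‖
  · by_cases ha : acm p m (x - c) = acm p m (y - c)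
    · -- same angular component: exact equality
      have : φ x - φ y = (x - y) * (ξ (acm p m (x - c)))⁻¹ * u := by
        have : φ x - φ y = (φ x - c) - (φ y - c) := by ring
        rw [this, heqx, heqy, ha]; ring
      rw [this, norm_mul, norm_mul, norm_inv, hξnorm _ (acm_isUnit p m hxc), hu]
      simp
    · -- different angular components
      have hφx0 : φ x - c ≠ 0 := by
        intro h; rw [h, norm_zero] at hnx; exact hxc (norm_eq_zero.mp hnx.symm)
      have hφy0 : φ y - c ≠ 0 := by
        intro h; rw [h, norm_zero] at hny; exact hyc (norm_eq_zero.mp hny.symm)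
      have hnφ : ‖φ x - c‖ = ‖φ y - c‖ := by rw [hnx, hny, hn]
      have h1 : ‖(φ x - c) - (φ y - c)‖ ≤ ‖φ x - c‖ * (p:ℝ) ^ (-(m:ℤ)) :=
        (acm_eq_iff p m hφx0 hφy0 hnφ).mp (hacx.trans hacy.symm)
      have h2 : ¬ ‖(x - c) - (y - c)‖ ≤ ‖x - c‖ * (p:ℝ) ^ (-(m:ℤ)) := by
        intro h
        exact ha ((acm_eq_iff p m hxc hyc hn).mpr h)
      push_neg at h2
      have e1 : (φ x - c) - (φ y - c) = φ x - φ y := by ring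
      have e2 : (x - c) - (y - c) = x - y := by ring
      rw [e1] at h1; rw [e2] at h2
      rw [hnx] at h1
      linarith
  · -- different norms
    have e2 : x - y = (x - c) + (-(y - c)) := by ring
    have hmax : ‖x - y‖ = max ‖x - c‖ ‖y - c‖ := by
      rw [e2, Padic.add_eq_max_of_ne (by rwa [norm_neg]), norm_neg]
    have e1 : φ x - φ y = (φ x - c) + (-(φ y - c)) := by ring
    calc ‖φ x - φ y‖ ≤ max ‖φ x - c‖ ‖-(φ y - c)‖ := by
          rw [e1]; exact Padic.nonarchimedean _ _
      _ = max ‖x - c‖ ‖y - c‖ := by rw [norm_neg, hnx, hny]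
      _ = ‖x - y‖ := hmax.symm
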